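/- There exists a polyhedron P in ℝ² given by finitely many linear inequalities with integer coefficients and an integer point x ∈ P that is irreducible in P but is not a vertex (extreme point) of conv(P ∩ ℤ²). Concretely, for P = {x ∈ ℝ² : x₁ + x₂ ≥ 1, 2x₁ − x₂ ≤ 2, −x₁ + 2x₂ ≤ 2}, the point (1,1) is irreducible in P ∩ ℤ² but is not an extreme point of conv(P ∩ ℤ²). -/

import Mathlib

def IsIntPt {n : ℕ} (x : Fin n → ℝ) : Prop := ∀ i, ∃ m : ℤ, x i = (m : ℝ)

def IrreduciblePt {n : ℕ} (Q : Set (Fin n → ℝ)) (x : Fin n → ℝ) : Prop :=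
  x ∈ Q ∧ IsIntPt x ∧
    ¬ ∃ y z : Fin n → ℝ, y ∈ Q ∧ z ∈ Q ∧ IsIntPt y ∧ IsIntPt z ∧ y ≠ z ∧
      x = (1 / 2 : ℝ) • (y + z)

/-- The polyhedron `P = {x ∈ ℝ² : x₁ + x₂ ≥ 1, 2x₁ − x₂ ≤ 2, −x₁ + 2x₂ ≤ 2}`. -/
def Pexample : Set (Fin 2 → ℝ) :=
  {x | 1 ≤ x 0 + x 1 ∧ 2 * x 0 - x 1 ≤ 2 ∧ -x 0 + 2 * x 1 ≤ 2}

/-- The point `(1,1)` is irreducible in `P ∩ ℤ²` but is not a vertex (extreme point) of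
`conv (P ∩ ℤ²)`. -/
theorem irreducible_not_vertex_example :
    IrreduciblePt Pexample (fun _ => 1) ∧
      (fun _ => (1 : ℝ)) ∉
        Set.extremePoints ℝ (convexHull ℝ {p ∈ Pexample | IsIntPt p}) := by
  constructor
  · refine ⟨⟨by norm_num, by norm_num, by norm_num⟩, fun i => ⟨1, by norm_num⟩, ?_⟩
    rintro ⟨y, z, hy, hz, hyint, hzint, hne, heq⟩
    obtain ⟨a, ha⟩ := hyint 0
    obtain ⟨b, hb⟩ := hyint 1
    obtain ⟨c, hc⟩ := hzint 0
    obtain ⟨d, hd⟩ := hzint 1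
    simp only [Pexample, Set.mem_setOf_eq] at hy hz
    obtain ⟨hy1, hy2, hy3⟩ := hy
    obtain ⟨hz1, hz2, hz3⟩ := hz
    have e0 := congrFun heq 0
    have e1 := congrFun heq 1
    simp only [Pi.smul_apply, Pi.add_apply, smul_eq_mul] at e0 e1
    simp only [ha, hb, hc, hd] at hy1 hy2 hy3 hz1 hz2 hz3 e0 e1
    have i1 : (1 : ℤ) ≤ a + b := by exact_mod_cast hy1
    have i2 : 2 * a - b ≤ 2 := by exact_mod_cast hy2
    have i3 : -a + 2 * b ≤ 2 := by exact_mod_cast hy3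
    have i4 : (1 : ℤ) ≤ c + d := by exact_mod_cast hz1
    have i5 : 2 * c - d ≤ 2 := by exact_mod_cast hz2
    have i6 : -c + 2 * d ≤ 2 := by exact_mod_cast hz3
    have j0 : (a : ℝ) + c = 2 := by linarith
    have j1 : (b : ℝ) + d = 2 := by linarith
    have k0 : a + c = 2 := by exact_mod_cast j0
    have k1 : b + d = 2 := by exact_mod_cast j1
    have habcd : a = 1 ∧ b = 1 ∧ c = 1 ∧ d = 1 := by omega
    apply hne
    funext i
    fin_cases i
    · show y 0 = z 0
      rw [ha, hc, habcd.1, habcd.2.2.1]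
    · show y 1 = z 1
      rw [hb, hd, habcd.2.1, habcd.2.2.2]
  · intro hext
    set S := {p ∈ Pexample | IsIntPt p} with hS
    have h01 : (![0, 1] : Fin 2 → ℝ) ∈ S := by
      refine ⟨⟨by norm_num, by norm_num, by norm_num⟩, fun i => ?_⟩
      fin_cases i
      · exact ⟨0, by norm_num⟩
      · exact ⟨1, by norm_num⟩
    have h10 : (![1, 0] : Fin 2 → ℝ) ∈ S := by
      refine ⟨⟨by norm_num, by norm_num, by norm_num⟩, fun i => ?_⟩
      fin_cases i
      · exact ⟨1, by norm_num⟩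
      · exact ⟨0, by norm_num⟩
    have h12 : (fun _ => (1/2 : ℝ)) ∈ convexHull ℝ S := by
      apply segment_subset_convexHull h01 h10
      refine ⟨1/2, 1/2, by norm_num, by norm_num, by norm_num, ?_⟩
      funext i
      fin_cases i <;> norm_num
    have h22 : (fun _ => (2 : ℝ)) ∈ convexHull ℝ S := by
      apply subset_convexHull
      exact ⟨⟨by norm_num, by norm_num, by norm_num⟩, fun i => ⟨2, by norm_num⟩⟩
    have hseg : (fun _ => (1 : ℝ)) ∈
        openSegment ℝ (fun _ => (1/2 : ℝ) : Fin 2 → ℝ) (fun _ => (2 : ℝ)) := by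
      refine ⟨2/3, 1/3, by norm_num, by norm_num, by norm_num, ?_⟩
      funext i
      simp only [Pi.add_apply, Pi.smul_apply, smul_eq_mul]
      norm_num
    have := (hext.2 h12 h22 hseg)
    have h := congrFun this 0
    norm_num at h
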